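/- Let k, r ∈ ℕ, let M be a finite multiset of vectors in {0,1,□}^d with cover (R_M, T_M), and let M' ⊆ M \ R_M be nonempty such that the compatibility graph on M' with threshold 2r is connected. If there exist a completion M* of M (with witnessing bijection φ) and a set S ⊆ {0,1}^d with |S| ≤ k such that every a ∈ M* has Hamming distance at most r to some vector in S, then γ(M') ≤ 4rk − r + |T_M|. -/
import Mathlib

open scoped Classical

/-- δ(a,b) for incomplete vectors: the number of coordinates on which
both entries are known and differ. -/
noncomputable def pdist {ι : Type} [Fintype ι] (a b : ι → Option Bool) : ℕ :=
  (Finset.univ.filter fun i => ∃ x y : Bool, a i = some x ∧ b i = some y ∧ x ≠ y).card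

/-- The compatibility graph on a finite set of incomplete vectors with threshold ρ. -/
def compatGraph {ι : Type} [Fintype ι] (S : Finset (ι → Option Bool)) (ρ : ℕ) :
    SimpleGraph {x // x ∈ S} :=
  SimpleGraph.fromRel fun a b => pdist a.1 b.1 ≤ ρ

/-- γ(S): the diameter (maximum pairwise δ) of a finite multiset of incomplete vectors. -/
noncomputable def mdiam {ι : Type} [Fintype ι] (S : Multiset (ι → Option Bool)) : ℕ :=
  (S.toFinset ×ˢ S.toFinset).sup fun p => pdist p.1 p.2

/-- `Mc` is a completion of `M`: a multiset of complete vectors in bijection with `M`,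
agreeing with the corresponding vectors on all non-missing entries. -/
def IsCompletion {ι : Type} (M : Multiset (ι → Option Bool))
    (Mc : Multiset (ι → Bool)) : Prop :=
  Multiset.Rel (fun a c => ∀ i (x : Bool), a i = some x → c i = x) M Mc

noncomputable def ndist {d : ℕ} (T : Finset (Fin d)) (x y : Fin d → Bool) : ℕ :=
  (Finset.univ.filter fun i => i ∉ T ∧ x i ≠ y i).card

lemma ndist_comm {d : ℕ} (T : Finset (Fin d)) (x y : Fin d → Bool) :
    ndist T x y = ndist T y x := by
  unfold ndist
  congr 1
  ext i
  simp only [Finset.mem_filter, Finset.mem_univ, true_and]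
  constructor <;> exact fun h => ⟨h.1, h.2.symm⟩

lemma ndist_self {d : ℕ} (T : Finset (Fin d)) (x : Fin d → Bool) : ndist T x x = 0 := by
  simp [ndist]

lemma ndist_triangle {d : ℕ} (T : Finset (Fin d)) (x y z : Fin d → Bool) :
    ndist T x z ≤ ndist T x y + ndist T y z := by
  refine le_trans (Finset.card_le_card ?_) (Finset.card_union_le _ _)
  intro i hi
  simp only [Finset.mem_filter, Finset.mem_union, Finset.mem_univ, true_and] at *
  rcases hi with ⟨hT, hxz⟩
  by_cases h : x i = y i
  · exact Or.inr ⟨hT, fun hyz => hxz (h.trans hyz)⟩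
  · exact Or.inl ⟨hT, h⟩

lemma ndist_le_hamming {d : ℕ} (T : Finset (Fin d)) (x y : Fin d → Bool) :
    ndist T x y ≤ hammingDist x y := by
  unfold ndist hammingDist
  apply Finset.card_le_card
  intro i hi
  simp only [Finset.mem_filter, Finset.mem_univ, true_and] at *
  exact hi.2

lemma walk_ndist {d : ℕ} {T : Finset (Fin d)} {ρ : ℕ} {S : Finset (Fin d → Bool)}
    {u v : {s // s ∈ S}}
    (p : (SimpleGraph.fromRel fun a b : {s // s ∈ S} => ndist T a.1 b.1 ≤ ρ).Walk u v) :
    ndist T u.1 v.1 ≤ ρ * p.length := by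
  induction p with
  | nil => simp [ndist_self]
  | @cons a b c h p ih =>
    have hab : ndist T a.1 b.1 ≤ ρ := by
      rw [SimpleGraph.fromRel_adj] at h
      rcases h.2 with h' | h'
      · exact h'
      · rw [ndist_comm]; exact h'
    calc ndist T a.1 c.1 ≤ ndist T a.1 b.1 + ndist T b.1 c.1 := ndist_triangle _ _ _ _
      _ ≤ ρ + ρ * p.length := Nat.add_le_add hab ih
      _ = ρ * (SimpleGraph.Walk.cons h p).length := by
          simp [SimpleGraph.Walk.length_cons, Nat.mul_add, Nat.mul_succ]; ring

theorem statement_6 {d : ℕ} (k r : ℕ)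
    (M R : Multiset (Fin d → Option Bool)) (T : Finset (Fin d))
    (hRM : R ≤ M)
    (hcover : ∀ v ∈ M, ∀ i : Fin d, v i = none → v ∈ R ∨ i ∈ T)
    (M' : Multiset (Fin d → Option Bool))
    (hM'M : M' ≤ M) (hM'R : ∀ v ∈ M', v ∉ R) (hne : M' ≠ 0)
    (hconn : (compatGraph M'.toFinset (2 * r)).Connected)
    (hsol : ∃ Mc : Multiset (Fin d → Bool), IsCompletion M Mc ∧
      ∃ S : Finset (Fin d → Bool), S.card ≤ k ∧
        ∀ a ∈ Mc, ∃ s ∈ S, hammingDist s a ≤ r) :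
    mdiam M' ≤ 4 * r * k - r + T.card := by
  obtain ⟨Mc, hcomp, S, hScard, hScov⟩ := hsol
  have key : ∀ a : {x // x ∈ M'.toFinset},
      ∃ c : Fin d → Bool, ∃ s, s ∈ S ∧ (∀ i (x : Bool), a.1 i = some x → c i = x) ∧
        hammingDist s c ≤ r := by
    rintro ⟨a, ha⟩
    have haM : a ∈ M := Multiset.mem_of_le hM'M (Multiset.mem_toFinset.1 ha)
    obtain ⟨c, hcMc, hc⟩ := Multiset.exists_mem_of_rel_of_mem hcomp haM
    obtain ⟨s, hs, hsr⟩ := hScov c hcMc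
    exact ⟨c, s, hs, hc, hsr⟩
  choose comp cent hcentS hagree hnear using key
  have hmiss : ∀ a : {x // x ∈ M'.toFinset}, ∀ i, a.1 i = none → i ∈ T := by
    rintro ⟨a, ha⟩ i hi
    have ha' := Multiset.mem_toFinset.1 ha
    rcases hcover a (Multiset.mem_of_le hM'M ha') i hi with h | h
    · exact absurd h (hM'R a ha')
    · exact h
  -- pdist is at most ndist of completions plus |T|
  have hpd : ∀ a b : {x // x ∈ M'.toFinset},
      pdist a.1 b.1 ≤ ndist T (comp a) (comp b) + T.card := by
    intro a b
    unfold pdist ndist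
    refine le_trans (Finset.card_le_card ?_) (Finset.card_union_le _ _)
    intro i hi
    simp only [Finset.mem_filter, Finset.mem_univ, true_and] at hi
    obtain ⟨x, y, hx, hy, hxy⟩ := hi
    by_cases hT : i ∈ T
    · exact Finset.mem_union_right _ hT
    · refine Finset.mem_union_left _ ?_
      simp only [Finset.mem_filter, Finset.mem_univ, true_and]
      refine ⟨hT, ?_⟩
      rw [hagree a i x hx, hagree b i y hy]
      exact fun h => hxy (by exact_mod_cast h)
  -- ndist of completions is at most pdist
  have hnd : ∀ a b : {x // x ∈ M'.toFinset},
      ndist T (comp a) (comp b) ≤ pdist a.1 b.1 := by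
    intro a b
    unfold ndist pdist
    apply Finset.card_le_card
    intro i hi
    simp only [Finset.mem_filter, Finset.mem_univ, true_and] at hi ⊢
    obtain ⟨hT, hne'⟩ := hi
    cases hax : a.1 i with
    | none => exact absurd (hmiss a i hax) hT
    | some x =>
      cases hbx : b.1 i with
      | none => exact absurd (hmiss b i hbx) hT
      | some y =>
        refine ⟨x, y, rfl, rfl, ?_⟩
        intro hxy
        exact hne' (by rw [hagree a i x hax, hagree b i y hbx, hxy])
  have hcc : ∀ a : {x // x ∈ M'.toFinset}, ndist T (cent a) (comp a) ≤ r :=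
    fun a => le_trans (ndist_le_hamming _ _ _) (hnear a)
  -- edge implies centers are close
  have hedge : ∀ a b : {x // x ∈ M'.toFinset}, (compatGraph M'.toFinset (2 * r)).Adj a b →
      ndist T (cent a) (cent b) ≤ 4 * r := by
    intro a b h
    have hpp : ndist T (comp a) (comp b) ≤ 2 * r := by
      rw [compatGraph, SimpleGraph.fromRel_adj] at h
      rcases h.2 with h' | h'
      · exact le_trans (hnd a b) h'
      · rw [ndist_comm]; exact le_trans (hnd b a) h'
    calc ndist T (cent a) (cent b)
        ≤ ndist T (cent a) (comp a) + ndist T (comp a) (cent b) := ndist_triangle _ _ _ _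
      _ ≤ ndist T (cent a) (comp a) + (ndist T (comp a) (comp b) + ndist T (comp b) (cent b)) :=
          Nat.add_le_add_left (ndist_triangle _ _ _ _) _
      _ ≤ r + (2 * r + r) := by
          refine Nat.add_le_add (hcc a) (Nat.add_le_add hpp ?_)
          rw [ndist_comm]; exact hcc b
      _ = 4 * r := by ring
  -- center graph
  let H : SimpleGraph {s // s ∈ S} :=
    SimpleGraph.fromRel fun a b => ndist T a.1 b.1 ≤ 4 * r
  let centS : {x // x ∈ M'.toFinset} → {s // s ∈ S} := fun a => ⟨cent a, hcentS a⟩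
  have hreach : ∀ u v : {x // x ∈ M'.toFinset}, H.Reachable (centS u) (centS v) := by
    intro u v
    obtain ⟨w⟩ := hconn.preconnected u v
    induction w with
    | nil => exact SimpleGraph.Reachable.refl _
    | @cons a b c h p ih =>
      refine SimpleGraph.Reachable.trans ?_ ih
      by_cases hcab : centS a = centS b
      · rw [hcab]
      · exact SimpleGraph.Adj.reachable ⟨hcab, Or.inl (hedge a b h)⟩
  have hcentdist : ∀ u v : {x // x ∈ M'.toFinset},
      ndist T (cent u) (cent v) ≤ 4 * r * (S.card - 1) := by
    intro u v
    obtain ⟨w⟩ := hreach u v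
    have hpath := w.toPath.2
    have hlen : (w.toPath.1).length ≤ S.card - 1 := by
      have := hpath.length_lt
      rw [Fintype.card_coe] at this
      omega
    have h3 := walk_ndist (T := T) (ρ := 4 * r) (u := centS u) (v := centS v) w.toPath.1
    exact le_trans h3 (Nat.mul_le_mul_left _ hlen)
  -- finish
  rw [mdiam]
  refine Finset.sup_le ?_
  rintro ⟨a, b⟩ hab
  rw [Finset.mem_product] at hab
  show pdist a b ≤ 4 * r * k - r + T.card
  set u : {x // x ∈ M'.toFinset} := ⟨a, hab.1⟩ with hu
  set v : {x // x ∈ M'.toFinset} := ⟨b, hab.2⟩ with hv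
  have h1 : pdist a b ≤ ndist T (comp u) (comp v) + T.card := hpd u v
  have h2 : ndist T (comp u) (comp v)
      ≤ r + (4 * r * (S.card - 1) + r) := by
    calc ndist T (comp u) (comp v)
        ≤ ndist T (comp u) (cent u) + ndist T (cent u) (comp v) := ndist_triangle _ _ _ _
      _ ≤ ndist T (comp u) (cent u) + (ndist T (cent u) (cent v) + ndist T (cent v) (comp v)) :=
          Nat.add_le_add_left (ndist_triangle _ _ _ _) _
      _ ≤ r + (4 * r * (S.card - 1) + r) := by
          refine Nat.add_le_add ?_ (Nat.add_le_add (hcentdist u v) (hcc v))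
          rw [ndist_comm]; exact hcc u
  have hS1 : 1 ≤ S.card := Finset.card_pos.2 ⟨cent u, hcentS u⟩
  have hk1 : 1 ≤ k := le_trans hS1 hScard
  have e1 : 4 * r * (S.card - 1) ≤ 4 * r * (k - 1) :=
    Nat.mul_le_mul_left _ (by omega)
  have e2 : 4 * r * k = 4 * r * (k - 1) + 4 * r := by
    obtain ⟨n, rfl⟩ : ∃ n, k = n + 1 := ⟨k - 1, by omega⟩
    simp [Nat.mul_add]
  omega
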